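/- arXiv:1602.01484 — 3 statements merged into one kernel-verified Lean document; each statement's English description precedes it below -/
import Mathlib

section
/- The following elliptic integral identity holds: ∫₀¹ (1 - u)·Π(u², u²) du = 1, where Π(n, m) = ∫₀^{π/2} dσ / ((1 - n sin²σ)·√(1 - m sin²σ)) is the complete elliptic integral of the third kind. -/
open MeasureTheory Set Real

noncomputable def ellF (u σ : ℝ) : ℝ :=
  (1 - u) * (1 / ((1 - u ^ 2 * Real.sin σ ^ 2) * Real.sqrt (1 - u ^ 2 * Real.sin σ ^ 2)))

lemma ellF_contOn {σ : ℝ} (hs1 : Real.sin σ ^ 2 < 1) :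
    ContinuousOn (fun u => ellF u σ) (Set.Icc (0:ℝ) 1) := by
  intro u hu
  have hu2 : u ^ 2 ≤ 1 := by nlinarith [hu.1, hu.2]
  have hA : 0 < 1 - u ^ 2 * Real.sin σ ^ 2 := by nlinarith [sq_nonneg (Real.sin σ)]
  have hden : ContinuousAt
      (fun u : ℝ => (1 - u ^ 2 * Real.sin σ ^ 2) * Real.sqrt (1 - u ^ 2 * Real.sin σ ^ 2)) u := by
    fun_prop
  have hne : (1 - u ^ 2 * Real.sin σ ^ 2) * Real.sqrt (1 - u ^ 2 * Real.sin σ ^ 2) ≠ 0 :=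
    (mul_pos hA (Real.sqrt_pos.mpr hA)).ne'
  exact (((continuous_const.sub continuous_id).continuousAt).mul
    (ContinuousAt.div continuousAt_const hden hne)).continuousWithinAt

lemma ellF_nonneg {u σ : ℝ} (hu0 : 0 ≤ u) (hu1 : u ≤ 1) (hs1 : Real.sin σ ^ 2 < 1) :
    0 ≤ ellF u σ := by
  have hu2 : u ^ 2 ≤ 1 := by nlinarith
  have hA : 0 < 1 - u ^ 2 * Real.sin σ ^ 2 := by nlinarith [sq_nonneg (Real.sin σ)]
  have := Real.sqrt_pos.mpr hA
  rw [ellF]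
  have h1u : 0 ≤ 1 - u := by linarith
  positivity

lemma ellF_meas : Measurable (fun p : ℝ × ℝ => ellF p.1 p.2) := by
  unfold ellF
  fun_prop

lemma ae_Ioo {b : ℝ} : ∀ᵐ σ ∂(volume.restrict (Set.Ioc (0:ℝ) b)), σ ∈ Set.Ioo (0:ℝ) b := by
  have h1 : ∀ᵐ σ ∂(volume.restrict (Set.Ioc (0:ℝ) b)), σ ∈ Set.Ioc (0:ℝ) b :=
    ae_restrict_mem measurableSet_Ioc
  have h2 : ∀ᵐ σ ∂(volume.restrict (Set.Ioc (0:ℝ) b)), σ ≠ b := by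
    refine Filter.Eventually.filter_mono (ae_mono Measure.restrict_le_self) ?_
    have : volume ({b} : Set ℝ) = 0 := Real.volume_singleton
    rw [MeasureTheory.ae_iff]
    simp [Set.setOf_eq_eq_singleton', this]
  filter_upwards [h1, h2] with σ hσ hne
  exact ⟨hσ.1, lt_of_le_of_ne hσ.2 hne⟩

lemma inner_int {σ : ℝ} (h1 : 0 < σ) (h2 : σ < Real.pi / 2) :
    ∫ u in (0:ℝ)..1, ellF u σ = 1 / (1 + Real.cos σ) := by
  have hpi : Real.pi / 2 < Real.pi := by
    have := Real.pi_pos; linarith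
  have hs0 : 0 < Real.sin σ := Real.sin_pos_of_pos_of_lt_pi h1 (h2.trans hpi)
  have hc0 : 0 < Real.cos σ := Real.cos_pos_of_mem_Ioo ⟨by linarith [Real.pi_pos], h2⟩
  set s := Real.sin σ with hs
  set c := Real.cos σ with hc
  have hpyth : s ^ 2 + c ^ 2 = 1 := Real.sin_sq_add_cos_sq σ
  have hc1 : c < 1 := by nlinarith
  have hs1 : s ^ 2 < 1 := by nlinarith
  set F : ℝ → ℝ := fun u => (u - (s ^ 2)⁻¹) / Real.sqrt (1 - s ^ 2 * u ^ 2) with hF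
  have key : ∀ u ∈ Set.uIcc (0:ℝ) 1, HasDerivAt F (ellF u σ) u := by
    intro u hu
    rw [Set.uIcc_of_le (by norm_num)] at hu
    have hu2 : u ^ 2 ≤ 1 := by nlinarith [hu.1, hu.2]
    have hA : 0 < 1 - s ^ 2 * u ^ 2 := by nlinarith [sq_nonneg s]
    have hq : 0 < Real.sqrt (1 - s ^ 2 * u ^ 2) := Real.sqrt_pos.mpr hA
    have hAd : HasDerivAt (fun u : ℝ => 1 - s ^ 2 * u ^ 2) (-(s ^ 2 * (2 * u))) u := by
      simpa using ((hasDerivAt_pow 2 u).const_mul (s ^ 2)).const_sub 1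
    have hsq : HasDerivAt (fun u : ℝ => Real.sqrt (1 - s ^ 2 * u ^ 2))
        (-(s ^ 2 * (2 * u)) / (2 * Real.sqrt (1 - s ^ 2 * u ^ 2))) u :=
      hAd.sqrt hA.ne'
    have hnum : HasDerivAt (fun u : ℝ => u - (s ^ 2)⁻¹) 1 u := (hasDerivAt_id u).sub_const _
    have hder := hnum.div hsq hq.ne'
    refine hder.congr_deriv ?_
    symm
    rw [ellF]
    rw [show (1 : ℝ) - u ^ 2 * Real.sin σ ^ 2 = 1 - s ^ 2 * u ^ 2 by rw [← hs]; ring]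
    set q := Real.sqrt (1 - s ^ 2 * u ^ 2) with hqdef
    have hqq : q ^ 2 = 1 - s ^ 2 * u ^ 2 := Real.sq_sqrt hA.le
    rw [← hqq]
    have hs2 : s ^ 2 ≠ 0 := by positivity
    field_simp
    linear_combination (-1) * hqq
  have hcont : IntervalIntegrable (fun u => ellF u σ) volume 0 1 := by
    apply ContinuousOn.intervalIntegrable
    intro u hu
    rw [Set.uIcc_of_le (by norm_num)] at hu
    have hu2 : u ^ 2 ≤ 1 := by nlinarith [hu.1, hu.2]
    have hA : 0 < 1 - u ^ 2 * s ^ 2 := by nlinarith [sq_nonneg s]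
    have hden : ContinuousAt
        (fun u : ℝ => (1 - u ^ 2 * Real.sin σ ^ 2) * Real.sqrt (1 - u ^ 2 * Real.sin σ ^ 2)) u := by
      fun_prop
    have hne : (1 - u ^ 2 * Real.sin σ ^ 2) * Real.sqrt (1 - u ^ 2 * Real.sin σ ^ 2) ≠ 0 := by
      rw [← hs]
      exact (mul_pos hA (Real.sqrt_pos.mpr hA)).ne'
    exact (((continuous_const.sub continuous_id).continuousAt).mul
      (ContinuousAt.div continuousAt_const hden hne)).continuousWithinAt
  rw [intervalIntegral.integral_eq_sub_of_hasDerivAt key hcont]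
  have h1s : Real.sqrt (1 - s ^ 2 * 1 ^ 2) = c := by
    rw [one_pow, mul_one]
    have : 1 - s ^ 2 = c ^ 2 := by linarith
    rw [this, Real.sqrt_sq hc0.le]
  have h0s : Real.sqrt (1 - s ^ 2 * 0 ^ 2) = 1 := by norm_num
  rw [hF]
  simp only [h1s, h0s]
  have hs2 : s ^ 2 = (1 - c) * (1 + c) := by nlinarith
  rw [hs2]
  have h1c : (0:ℝ) < 1 - c := by linarith
  have h2c : (0:ℝ) < 1 + c := by linarith
  field_simp
  ring


lemma outer_int : ∫ σ in (0:ℝ)..(Real.pi / 2), 1 / (1 + Real.cos σ) = 1 := by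
  have hpi := Real.pi_pos
  have key : ∀ σ ∈ Set.uIcc (0:ℝ) (Real.pi / 2),
      HasDerivAt (fun x => Real.tan (x / 2)) (1 / (1 + Real.cos σ)) σ := by
    intro σ hσ
    rw [Set.uIcc_of_le (by linarith)] at hσ
    have hcos : 0 < Real.cos (σ / 2) := by
      apply Real.cos_pos_of_mem_Ioo
      constructor <;> [linarith [hσ.1]; linarith [hσ.2, Real.pi_pos]]
    have h := (Real.hasDerivAt_tan hcos.ne').comp σ ((hasDerivAt_id σ).div_const 2)
    refine h.congr_deriv ?_
    symm
    have hsum : Real.cos (σ / 2) ^ 2 = 1 / 2 + Real.cos σ / 2 := by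
      have := Real.cos_sq (σ / 2)
      rwa [show 2 * (σ / 2) = σ by ring] at this
    rw [hsum]
    have : (0:ℝ) < 1 / 2 + Real.cos σ / 2 := by rw [← hsum]; positivity
    have h2 : 0 < 1 + Real.cos σ := by linarith
    rw [div_mul_eq_mul_div, div_eq_div_iff h2.ne' this.ne']
    ring
  have hcont : IntervalIntegrable (fun σ => 1 / (1 + Real.cos σ)) volume 0 (Real.pi / 2) := by
    apply ContinuousOn.intervalIntegrable
    intro σ hσ
    rw [Set.uIcc_of_le (by linarith)] at hσ
    have : 0 < 1 + Real.cos σ := by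
      have := Real.neg_one_le_cos σ
      have hc : 0 ≤ Real.cos σ := Real.cos_nonneg_of_mem_Icc ⟨by linarith [hσ.1], hσ.2⟩
      linarith
    exact (continuousAt_const.div
      (continuousAt_const.add (Real.continuous_cos.continuousAt)) this.ne').continuousWithinAt
  rw [intervalIntegral.integral_eq_sub_of_hasDerivAt key hcont]
  rw [show Real.pi / 2 / 2 = Real.pi / 4 by ring]
  norm_num [Real.tan_pi_div_four]


/-- `∫₀¹ (1-u) Π(u²,u²) du = 1`, where `Π` is the complete elliptic integral
of the third kind. -/
theorem stmt3 (Pi' : ℝ → ℝ → ℝ)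
    (hPi : ∀ n m : ℝ, Pi' n m = ∫ σ in (0:ℝ)..(Real.pi / 2),
      1 / ((1 - n * Real.sin σ ^ 2) * Real.sqrt (1 - m * Real.sin σ ^ 2))) :
    ∫ u in (0:ℝ)..1, (1 - u) * Pi' (u ^ 2) (u ^ 2) = 1 := by
  have hpi := Real.pi_pos
  have hpi2 : (0:ℝ) ≤ Real.pi / 2 := by linarith
  set μ := volume.restrict (Set.Ioc (0:ℝ) 1) with hμ
  set ν := volume.restrict (Set.Ioc (0:ℝ) (Real.pi / 2)) with hν
  -- sin σ ^ 2 < 1 for σ in Ioo 0 (π/2)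
  have hsin : ∀ σ ∈ Set.Ioo (0:ℝ) (Real.pi / 2), Real.sin σ ^ 2 < 1 := by
    intro σ hσ
    have hc : 0 < Real.cos σ := Real.cos_pos_of_mem_Ioo ⟨by linarith [hσ.1], hσ.2⟩
    nlinarith [Real.sin_sq_add_cos_sq σ]
  -- section integrability in u
  have hsec : ∀ σ ∈ Set.Ioo (0:ℝ) (Real.pi / 2), Integrable (fun u => ellF u σ) μ := by
    intro σ hσ
    exact ((ellF_contOn (hsin σ hσ)).integrableOn_Icc).mono_set Set.Ioc_subset_Icc_self
  -- value of the u-integral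
  have hval : ∀ σ ∈ Set.Ioo (0:ℝ) (Real.pi / 2),
      ∫ u, ellF u σ ∂μ = 1 / (1 + Real.cos σ) := by
    intro σ hσ
    rw [hμ, ← intervalIntegral.integral_of_le (by norm_num : (0:ℝ) ≤ 1)]
    exact inner_int hσ.1 hσ.2
  -- product integrability
  have hint : Integrable (fun p : ℝ × ℝ => ellF p.1 p.2) (μ.prod ν) := by
    rw [MeasureTheory.integrable_prod_iff' (ellF_meas.aestronglyMeasurable)]
    constructor
    · filter_upwards [ae_Ioo] with σ hσ
      exact hsec σ hσ
    · have hmaj : Integrable (fun σ => 1 / (1 + Real.cos σ)) ν := by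
        apply (ContinuousOn.integrableOn_Icc ?_).mono_set Set.Ioc_subset_Icc_self
        intro σ hσ
        have hcn : 0 ≤ Real.cos σ := Real.cos_nonneg_of_mem_Icc ⟨by linarith [hσ.1], hσ.2⟩
        have h3 : (0:ℝ) < 1 + Real.cos σ := by linarith
        exact (continuousAt_const.div
          (continuousAt_const.add Real.continuous_cos.continuousAt) h3.ne').continuousWithinAt
      have heq : (fun σ => 1 / (1 + Real.cos σ)) =ᵐ[ν] fun σ => ∫ u, ‖ellF u σ‖ ∂μ := by
        filter_upwards [ae_Ioo] with σ hσ
        rw [← hval σ hσ]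
        apply MeasureTheory.integral_congr_ae
        filter_upwards [ae_restrict_mem measurableSet_Ioc] with u hu
        exact (Real.norm_of_nonneg (ellF_nonneg hu.1.le hu.2 (hsin σ hσ))).symm
      exact hmaj.congr heq
  -- rewrite LHS
  have lhs1 : ∫ u in (0:ℝ)..1, (1 - u) * Pi' (u ^ 2) (u ^ 2)
      = ∫ u, (∫ σ, ellF u σ ∂ν) ∂μ := by
    rw [hμ, ← intervalIntegral.integral_of_le (by norm_num : (0:ℝ) ≤ 1)]
    apply intervalIntegral.integral_congr
    intro u _
    show (1 - u) * Pi' (u ^ 2) (u ^ 2) = ∫ σ, ellF u σ ∂ν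
    rw [hPi, hν, ← intervalIntegral.integral_of_le hpi2, ← intervalIntegral.integral_const_mul]
    rfl
  rw [lhs1, MeasureTheory.integral_integral_swap hint]
  have : ∫ σ, (∫ u, ellF u σ ∂μ) ∂ν = ∫ σ, 1 / (1 + Real.cos σ) ∂ν := by
    apply MeasureTheory.integral_congr_ae
    filter_upwards [ae_Ioo] with σ hσ
    exact hval σ hσ
  rw [this, hν, ← intervalIntegral.integral_of_le hpi2]
  exact outer_int
end

section
/- For 0 < a, b with a² + b² = 1 and a,b ≠ 0, the integral (1/(2π))∫₀^{2π}∫₀^{π/2} sin³(σ)cos(σ)/(1 - cos⁴(σ)sin²(2θ))^{3/2} dσ dθ, multiplied by 1/(ab), equals 1/(π a b). Equivalently, ∫₀^{2π}∫₀^{π/2} sin³(σ)cos(σ)/(1 - cos⁴(σ)sin²(2θ))^{3/2} dσ dθ = 2. -/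
open Real intervalIntegral

-- rpow to sqrt helper
lemma rpow32 {x : ℝ} (hx : 0 ≤ x) : x ^ ((3:ℝ)/2) = x * Real.sqrt x := by
  rw [show (3:ℝ)/2 = 1 + 1/2 by norm_num, Real.rpow_add' hx (by norm_num), Real.rpow_one,
    Real.sqrt_eq_rpow]

lemma inner_int_s5 (k : ℝ) (hk0 : 0 ≤ k) (hk1 : k ≤ 1) :
    (∫ σ in (0:ℝ)..(Real.pi/2), Real.sin σ ^ 3 * Real.cos σ /
      (1 - Real.cos σ ^ 4 * k) ^ ((3:ℝ)/2))
    = 1 / (2 * (1 + Real.sqrt (1 - k))) := by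
  rcases eq_or_lt_of_le hk1 with hk1 | hk1
  · -- k = 1
    subst hk1
    have hX : ∀ σ : ℝ, 0 < 1 + Real.cos σ ^ 2 := fun σ => by positivity
    have hcongr : (∫ σ in (0:ℝ)..(Real.pi/2), Real.sin σ ^ 3 * Real.cos σ /
          (1 - Real.cos σ ^ 4 * 1) ^ ((3:ℝ)/2))
        = ∫ σ in (0:ℝ)..(Real.pi/2), Real.cos σ /
          ((1 + Real.cos σ ^ 2) * Real.sqrt (1 + Real.cos σ ^ 2)) := by
      apply intervalIntegral.integral_congr_ae
      filter_upwards with σ hσ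
      rw [Set.uIoc_of_le (by positivity)] at hσ
      have hσ0 : 0 < σ := hσ.1
      have hσpi : σ ≤ Real.pi/2 := hσ.2
      have hsin : 0 < Real.sin σ :=
        Real.sin_pos_of_pos_of_lt_pi hσ0 (by linarith [Real.pi_pos])
      have h1 : 1 - Real.cos σ ^ 4 * 1 = Real.sin σ ^ 2 * (1 + Real.cos σ ^ 2) := by
        nlinarith [Real.sin_sq_add_cos_sq σ]
      rw [h1, Real.mul_rpow (by positivity) (by positivity)]
      have h2 : (Real.sin σ ^ 2) ^ ((3:ℝ)/2) = Real.sin σ ^ 3 := by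
        rw [← Real.rpow_natCast (Real.sin σ) 2, ← Real.rpow_mul hsin.le]
        norm_num
      rw [h2, rpow32 (hX σ).le,
        mul_div_mul_left _ _ (pow_ne_zero 3 hsin.ne')]
    rw [hcongr]
    have key : ∀ σ : ℝ, HasDerivAt (fun x => Real.sin x / (2 * Real.sqrt (1 + Real.cos x ^ 2)))
        (Real.cos σ / ((1 + Real.cos σ ^ 2) * Real.sqrt (1 + Real.cos σ ^ 2))) σ := by
      intro σ
      have hXσ := hX σ
      have hu : 0 < Real.sqrt (1 + Real.cos σ ^ 2) := Real.sqrt_pos.2 hXσ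
      have hu2 : Real.sqrt (1 + Real.cos σ ^ 2) ^ 2 = 1 + Real.cos σ ^ 2 := Real.sq_sqrt hXσ.le
      have hcos := Real.hasDerivAt_cos σ
      have hX' : HasDerivAt (fun x => 1 + Real.cos x ^ 2) (2 * Real.cos σ ^ 1 * (-Real.sin σ)) σ :=
        (hcos.pow 2).const_add 1
      have hsq := (hX'.sqrt hXσ.ne').const_mul 2
      have := (Real.hasDerivAt_sin σ).div hsq (by positivity)
      refine (this.congr_deriv ?_); symm
      have hpy := Real.sin_sq_add_cos_sq σ
      field_simp
      ring_nf
      linear_combination (2*Real.cos σ - Real.cos σ*(1+Real.cos σ^2))*hu2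
        - (Real.cos σ*(1+Real.cos σ^2))*hpy
    rw [intervalIntegral.integral_eq_sub_of_hasDerivAt (fun σ _ => key σ) ?_]
    · simp [Real.sin_pi_div_two, Real.cos_pi_div_two]
    · apply ContinuousOn.intervalIntegrable
      apply ContinuousOn.div
      · fun_prop
      · fun_prop
      · intro x _
        have := hX x
        have := Real.sqrt_pos.2 (hX x)
        positivity
  rcases eq_or_lt_of_le hk0 with hk0 | hk0
  · -- k = 0
    subst hk0
    have key : ∀ σ : ℝ, HasDerivAt (fun x => Real.sin x ^ 4 / 4)
        (Real.sin σ ^ 3 * Real.cos σ / (1 - Real.cos σ ^ 4 * 0) ^ ((3:ℝ)/2)) σ := by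
      intro σ
      have := ((Real.hasDerivAt_sin σ).pow 4).div_const 4
      refine (this.congr_deriv ?_); symm
      simp [Real.one_rpow]
      ring
    rw [intervalIntegral.integral_eq_sub_of_hasDerivAt (fun σ _ => key σ) ?_]
    · norm_num [Real.sin_pi_div_two, Real.sqrt_one]
    · apply ContinuousOn.intervalIntegrable
      have : ∀ σ : ℝ, Real.sin σ ^ 3 * Real.cos σ / (1 - Real.cos σ ^ 4 * 0) ^ ((3:ℝ)/2)
          = Real.sin σ ^ 3 * Real.cos σ := by
        intro σ; simp [Real.one_rpow]
      simp only [this]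
      fun_prop
  · -- 0 < k < 1
    have hs1k : Real.sqrt (1 - k) ^ 2 = 1 - k := Real.sq_sqrt (by linarith)
    have hs1k' : 0 < Real.sqrt (1 - k) := Real.sqrt_pos.2 (by linarith)
    have hDpos : ∀ σ : ℝ, 0 < 1 - Real.cos σ ^ 4 * k := by
      intro σ
      have h1 : Real.cos σ ^ 4 ≤ 1 := by
        have h2 := Real.cos_sq_le_one σ; nlinarith [sq_nonneg (Real.cos σ ^ 2 - 1), sq_nonneg (Real.cos σ)]
      have h0 : (0:ℝ) ≤ Real.cos σ ^ 4 := by positivity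
      nlinarith
    have key : ∀ σ : ℝ, HasDerivAt (fun x => (1/k - Real.cos x ^ 2) /
        (2 * Real.sqrt (1 - Real.cos x ^ 4 * k)))
        (Real.sin σ ^ 3 * Real.cos σ / (1 - Real.cos σ ^ 4 * k) ^ ((3:ℝ)/2)) σ := by
      intro σ
      have hD := hDpos σ
      have hsD : 0 < Real.sqrt (1 - Real.cos σ ^ 4 * k) := Real.sqrt_pos.2 hD
      have hsD2 : Real.sqrt (1 - Real.cos σ ^ 4 * k) ^ 2 = 1 - Real.cos σ ^ 4 * k :=
        Real.sq_sqrt hD.le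
      have hcos := Real.hasDerivAt_cos σ
      have hc2 : HasDerivAt (fun x => Real.cos x ^ 2) (2 * Real.cos σ ^ 1 * (-Real.sin σ)) σ :=
        hcos.pow 2
      have hc4 : HasDerivAt (fun x => Real.cos x ^ 4) (4 * Real.cos σ ^ 3 * (-Real.sin σ)) σ :=
        hcos.pow 4
      have hDd : HasDerivAt (fun x => 1 - Real.cos x ^ 4 * k)
          (-(4 * Real.cos σ ^ 3 * (-Real.sin σ) * k)) σ := (hc4.mul_const k).const_sub 1
      have hsq := (hDd.sqrt hD.ne').const_mul 2
      have hN : HasDerivAt (fun x => 1/k - Real.cos x ^ 2)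
          (-(2 * Real.cos σ ^ 1 * (-Real.sin σ))) σ := hc2.const_sub (1/k)
      have := hN.div hsq (by positivity)
      refine (this.congr_deriv ?_); symm
      rw [rpow32 hD.le]
      have hpy := Real.sin_sq_add_cos_sq σ
      field_simp
      linear_combination (4*Real.sin σ*Real.cos σ*(1 - Real.cos σ ^ 4 * k)) * hpy
        + (4*Real.sin σ^3*Real.cos σ - 4*Real.sin σ*Real.cos σ*(1 - Real.cos σ ^ 4 * k)) * hsD2
    rw [intervalIntegral.integral_eq_sub_of_hasDerivAt (fun σ _ => key σ) ?_]
    · simp only [Real.cos_pi_div_two, Real.cos_zero]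
      norm_num
      rw [show (1:ℝ) - k = Real.sqrt (1-k) ^ 2 from hs1k.symm]
      rw [Real.sqrt_sq hs1k'.le]
      field_simp
      nlinarith [hs1k]
    · apply ContinuousOn.intervalIntegrable
      apply ContinuousOn.div
      · fun_prop
      · apply ContinuousOn.rpow_const
        · fun_prop
        · intro x _; left; exact (hDpos x).ne'
      · intro x _
        exact (Real.rpow_pos_of_pos (hDpos x) _).ne'

noncomputable def gout (θ : ℝ) : ℝ := 1 / (2 * (1 + |Real.cos (2 * θ)|))

lemma gout_cont : Continuous gout := by
  apply Continuous.div continuous_const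
  · fun_prop
  · intro θ
    have := abs_nonneg (Real.cos (2*θ))
    positivity

lemma inner_theta (θ : ℝ) :
    (∫ σ in (0:ℝ)..(Real.pi/2), Real.sin σ ^ 3 * Real.cos σ /
      (1 - Real.cos σ ^ 4 * Real.sin (2 * θ) ^ 2) ^ ((3:ℝ)/2)) = gout θ := by
  rw [inner_int_s5 _ (sq_nonneg _) (Real.sin_sq_le_one _), gout]
  rw [← Real.cos_sq' (2*θ), Real.sqrt_sq_eq_abs]

lemma gout_quarter : (∫ θ in (0:ℝ)..(Real.pi/4), gout θ) = 1/4 := by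
  have hpi := Real.pi_pos
  have hc : ∀ θ ∈ Set.uIcc (0:ℝ) (Real.pi/4), gout θ = 1 / (4 * Real.cos θ ^ 2) := by
    intro θ hθ
    rw [Set.uIcc_of_le (by positivity)] at hθ
    have h1 : 0 ≤ Real.cos (2*θ) := by
      apply Real.cos_nonneg_of_mem_Icc
      constructor <;> [linarith [hθ.1]; linarith [hθ.2]]
    rw [gout, abs_of_nonneg h1, Real.cos_two_mul]
    ring_nf
  rw [intervalIntegral.integral_congr hc]
  have hcosne : ∀ θ ∈ Set.uIcc (0:ℝ) (Real.pi/4), 0 < Real.cos θ := by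
    intro θ hθ
    rw [Set.uIcc_of_le (by positivity)] at hθ
    apply Real.cos_pos_of_mem_Ioo
    constructor <;> [linarith [hθ.1]; linarith [hθ.2]]
  rw [intervalIntegral.integral_eq_sub_of_hasDerivAt
    (f := fun θ => Real.tan θ / 4)
    (fun θ hθ => by
      have := (Real.hasDerivAt_tan (hcosne θ hθ).ne').div_const 4
      refine (this.congr_deriv ?_); symm
      ring) ?_]
  · rw [Real.tan_pi_div_four, Real.tan_zero]; norm_num
  · apply ContinuousOn.intervalIntegrable
    apply ContinuousOn.div continuousOn_const (by fun_prop)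
    intro θ hθ
    have := hcosne θ hθ
    positivity

lemma gout_half : (∫ θ in (0:ℝ)..(Real.pi/2), gout θ) = 1/2 := by
  have hpi := Real.pi_pos
  have hint : ∀ t₁ t₂ : ℝ, IntervalIntegrable gout MeasureTheory.volume t₁ t₂ :=
    fun t₁ t₂ => gout_cont.intervalIntegrable t₁ t₂
  have hsplit := intervalIntegral.integral_add_adjacent_intervals
    (hint 0 (Real.pi/4)) (hint (Real.pi/4) (Real.pi/2))
  have hsym : (∫ θ in (Real.pi/4)..(Real.pi/2), gout θ)
      = ∫ θ in (0:ℝ)..(Real.pi/4), gout θ := by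
    have h := intervalIntegral.integral_comp_sub_left (a := (0:ℝ)) (b := Real.pi/4)
      gout (Real.pi/2)
    have h2 : ∀ x : ℝ, gout (Real.pi/2 - x) = gout x := by
      intro x
      simp only [gout]
      rw [show 2 * (Real.pi/2 - x) = Real.pi - 2*x by ring, Real.cos_pi_sub, abs_neg]
    simp only [h2] at h
    rw [show Real.pi/2 - Real.pi/4 = Real.pi/4 by ring, sub_zero] at h
    exact h.symm
  rw [← hsplit, hsym, gout_quarter]
  norm_num

lemma gout_per : Function.Periodic gout (Real.pi/2) := by
  intro θ
  simp only [gout]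
  rw [show 2 * (θ + Real.pi/2) = 2*θ + Real.pi by ring, Real.cos_add_pi, abs_neg]

lemma gout_full : (∫ θ in (0:ℝ)..(2*Real.pi), gout θ) = 2 := by
  have hint : ∀ t₁ t₂ : ℝ, IntervalIntegrable gout MeasureTheory.volume t₁ t₂ :=
    fun t₁ t₂ => gout_cont.intervalIntegrable t₁ t₂
  have h4 : (2*Real.pi) = (0:ℝ) + (4:ℤ) • (Real.pi/2) := by
    rw [zsmul_eq_mul]; push_cast; ring
  rw [h4, gout_per.intervalIntegral_add_zsmul_eq 4 0 hint]
  rw [zero_add, gout_half]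
  norm_num

theorem stmt5 (a b : ℝ) (ha : 0 < a) (hb : 0 < b) (hab : a ^ 2 + b ^ 2 = 1) :
    (1 / (2 * Real.pi)) * (1 / (a * b)) *
        (∫ θ in (0:ℝ)..(2 * Real.pi), ∫ σ in (0:ℝ)..(Real.pi / 2),
          Real.sin σ ^ 3 * Real.cos σ /
            (1 - Real.cos σ ^ 4 * Real.sin (2 * θ) ^ 2) ^ ((3:ℝ)/2))
        = 1 / (Real.pi * a * b) ∧
      (∫ θ in (0:ℝ)..(2 * Real.pi), ∫ σ in (0:ℝ)..(Real.pi / 2),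
          Real.sin σ ^ 3 * Real.cos σ /
            (1 - Real.cos σ ^ 4 * Real.sin (2 * θ) ^ 2) ^ ((3:ℝ)/2)) = 2 := by
  have h2 : (∫ θ in (0:ℝ)..(2 * Real.pi), ∫ σ in (0:ℝ)..(Real.pi / 2),
      Real.sin σ ^ 3 * Real.cos σ /
        (1 - Real.cos σ ^ 4 * Real.sin (2 * θ) ^ 2) ^ ((3:ℝ)/2)) = 2 := by
    simp only [inner_theta]
    exact gout_full
  refine ⟨?_, h2⟩
  rw [h2]
  have hpi := Real.pi_ne_zero
  field_simp
end

section
/- Let v = (v₁,v₂,v₃,v₄) range over ℝ⁴ with Gaussian weight e^{-‖v‖²/2}. Then (1/(2π)²)·∫_{ℝ⁴} (‖v‖²·|v₄| / (‖v‖² - v₃²)^{3/2})·e^{-‖v‖²/2} dv = 1. -/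
open MeasureTheory Real Set

section AuxStmt18

lemma expHalf (x : ℝ) : Real.exp (-x^2/2) = Real.exp (-(2⁻¹) * x^2) := by ring_nf

lemma integrable_exp_half : Integrable fun x : ℝ => Real.exp (-x^2/2) := by
  simp_rw [expHalf]; exact integrable_exp_neg_mul_sq (by norm_num)

lemma integrable_sq_exp_half : Integrable fun x : ℝ => x^2 * Real.exp (-x^2/2) := by
  simp_rw [expHalf]
  have := integrable_rpow_mul_exp_neg_mul_sq (b := 2⁻¹) (by norm_num) (s := 2) (by norm_num)
  simpa [Real.rpow_natCast] using this

lemma gauss_e : ∫ x : ℝ, Real.exp (-x^2/2) = √(2*π) := by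
  simp_rw [expHalf]
  rw [integral_gaussian]
  congr 1; field_simp

lemma gauss_e_Ioi : ∫ x in Ioi (0:ℝ), Real.exp (-x^2/2) = √(2*π)/2 := by
  simp_rw [expHalf]
  rw [integral_gaussian_Ioi]
  congr 2; field_simp

lemma two_rpow : (2:ℝ) ^ ((3:ℝ)/2) = 2 * √2 := by
  rw [show ((3:ℝ)/2) = 1 + 1/2 by norm_num, Real.rpow_add (by norm_num), Real.rpow_one,
    ← Real.sqrt_eq_rpow]

lemma gamma_32 : Real.Gamma (3/2) = √π / 2 := by
  rw [show ((3:ℝ)/2) = 1/2 + 1 by norm_num, Real.Gamma_add_one (by norm_num), Real.Gamma_one_half_eq]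
  ring

lemma gauss_sq_Ioi : ∫ x in Ioi (0:ℝ), x^2 * Real.exp (-x^2/2) = √(2*π)/2 := by
  have h := integral_comp_rpow_Ioi_of_pos (p := 2)
      (g := fun y : ℝ => (1/2) * (y ^ ((1:ℝ)/2) * Real.exp (-(2⁻¹ * y)))) (by norm_num)
  have h2 : ∫ x in Ioi (0:ℝ), x^2 * Real.exp (-x^2/2)
      = ∫ x in Ioi (0:ℝ), (2 * x ^ ((2:ℝ) - 1)) • ((1/2) * ((x ^ (2:ℝ)) ^ ((1:ℝ)/2) * Real.exp (-(2⁻¹ * x ^ (2:ℝ))))) := by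
    refine setIntegral_congr_fun measurableSet_Ioi (fun x hx => ?_)
    have hx0 : (0:ℝ) < x := hx
    rw [show ((2:ℝ) - 1) = 1 by norm_num, Real.rpow_one,
      show (x : ℝ) ^ (2:ℝ) = x ^ 2 by rw [← Real.rpow_natCast x 2]; norm_num,
      ← Real.sqrt_eq_rpow, Real.sqrt_sq hx0.le]
    simp only [smul_eq_mul]; ring_nf
  rw [h2, h]
  have h3 : ∫ y in Ioi (0:ℝ), (1/2) * (y ^ ((1:ℝ)/2) * Real.exp (-(2⁻¹ * y)))
      = (1/2) * ∫ y in Ioi (0:ℝ), y ^ ((3:ℝ)/2 - 1) * Real.exp (-(2⁻¹ * y)) := by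
    rw [← integral_const_mul]
    norm_num
  rw [h3, integral_rpow_mul_exp_neg_mul_Ioi (by norm_num) (by norm_num)]
  have : ((1:ℝ)/2⁻¹) = 2 := by norm_num
  rw [this, two_rpow, gamma_32]
  rw [show √(2*π) = √2 * √π from Real.sqrt_mul (by norm_num) π]
  ring

lemma gauss_sq : ∫ x : ℝ, x^2 * Real.exp (-x^2/2) = √(2*π) := by
  rw [show (fun x : ℝ => x^2 * Real.exp (-x^2/2))
      = fun x : ℝ => (fun t : ℝ => t^2 * Real.exp (-t^2/2)) |x| from funext fun x => by
        simp only []; rw [sq_abs]]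
  rw [integral_comp_abs (f := fun t : ℝ => t^2 * Real.exp (-t^2/2)), gauss_sq_Ioi]
  ring


noncomputable def Cfun (θ : ℝ) : ℝ := max (Real.cos θ) 0 * |Real.sin θ|

lemma Cfun_cont : Continuous Cfun :=
  (Real.continuous_cos.max continuous_const).mul Real.continuous_sin.abs

lemma piece1 : ∫ θ in (-π)..(-(π/2)), Cfun θ = 0 := by
  rw [intervalIntegral.integral_congr (g := fun _ => (0:ℝ)) ?_, intervalIntegral.integral_zero]
  intro θ hθ
  rw [uIcc_of_le (by linarith [pi_pos])] at hθ
  have h1 : Real.cos θ ≤ 0 := by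
    have := Real.cos_nonpos_of_pi_div_two_le_of_le (x := -θ) (by linarith [hθ.2]) (by linarith [hθ.1, pi_pos])
    rwa [Real.cos_neg] at this
  simp [Cfun, max_eq_right h1]

lemma piece4 : ∫ θ in (π/2)..π, Cfun θ = 0 := by
  rw [intervalIntegral.integral_congr (g := fun _ => (0:ℝ)) ?_, intervalIntegral.integral_zero]
  intro θ hθ
  rw [uIcc_of_le (by linarith [pi_pos])] at hθ
  have h1 : Real.cos θ ≤ 0 :=
    Real.cos_nonpos_of_pi_div_two_le_of_le hθ.1 (by linarith [hθ.2, pi_pos])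
  simp [Cfun, max_eq_right h1]

lemma piece2 : ∫ θ in (-(π/2))..0, Cfun θ = 1/2 := by
  have hcong : ∫ θ in (-(π/2))..0, Cfun θ = ∫ θ in (-(π/2))..0, Real.cos θ * (-Real.sin θ) := by
    apply intervalIntegral.integral_congr
    intro θ hθ
    rw [uIcc_of_le (by linarith [pi_pos])] at hθ
    have h1 : 0 ≤ Real.cos θ :=
      Real.cos_nonneg_of_mem_Icc ⟨by linarith [hθ.1], by linarith [hθ.2, pi_pos]⟩
    have h2 : Real.sin θ ≤ 0 :=
      Real.sin_nonpos_of_nonpos_of_neg_pi_le hθ.2 (by linarith [hθ.1, pi_pos])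
    simp [Cfun, max_eq_left h1, abs_of_nonpos h2]
  rw [hcong]
  have hd : ∀ θ ∈ uIcc (-(π/2)) (0:ℝ), HasDerivAt (fun t => Real.cos t ^ 2 / 2) (Real.cos θ * (-Real.sin θ)) θ := by
    intro θ _
    have := ((Real.hasDerivAt_cos θ).fun_pow 2).div_const 2
    refine this.congr_deriv ?_
    ring
  rw [intervalIntegral.integral_eq_sub_of_hasDerivAt hd
    ((Real.continuous_cos.mul Real.continuous_sin.neg).intervalIntegrable _ _)]
  norm_num

lemma piece3 : ∫ θ in (0:ℝ)..(π/2), Cfun θ = 1/2 := by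
  have hcong : ∫ θ in (0:ℝ)..(π/2), Cfun θ = ∫ θ in (0:ℝ)..(π/2), Real.cos θ * Real.sin θ := by
    apply intervalIntegral.integral_congr
    intro θ hθ
    rw [uIcc_of_le (by linarith [pi_pos])] at hθ
    have h1 : 0 ≤ Real.cos θ :=
      Real.cos_nonneg_of_mem_Icc ⟨by linarith [hθ.1, pi_pos], hθ.2⟩
    have h2 : 0 ≤ Real.sin θ :=
      Real.sin_nonneg_of_nonneg_of_le_pi hθ.1 (by linarith [hθ.2, pi_pos])
    simp [Cfun, max_eq_left h1, abs_of_nonneg h2]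
  rw [hcong]
  have hd : ∀ θ ∈ uIcc (0:ℝ) (π/2), HasDerivAt (fun t => Real.sin t ^ 2 / 2) (Real.cos θ * Real.sin θ) θ := by
    intro θ _
    have := ((Real.hasDerivAt_sin θ).fun_pow 2).div_const 2
    refine this.congr_deriv ?_
    ring
  rw [intervalIntegral.integral_eq_sub_of_hasDerivAt hd
    ((Real.continuous_cos.mul Real.continuous_sin).intervalIntegrable _ _)]
  norm_num

lemma theta_int : ∫ θ in Ioo (-π) π, Cfun θ = 1 := by
  rw [← integral_Ioc_eq_integral_Ioo,
    ← intervalIntegral.integral_of_le (by linarith [pi_pos] : (-π:ℝ) ≤ π)]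
  have ii : ∀ a b : ℝ, IntervalIntegrable Cfun volume a b := fun a b =>
    Cfun_cont.intervalIntegrable a b
  rw [← intervalIntegral.integral_add_adjacent_intervals (b := -(π/2)) (ii _ _) (ii _ _),
    ← intervalIntegral.integral_add_adjacent_intervals (a := -(π/2)) (b := 0) (ii _ _) (ii _ _),
    ← intervalIntegral.integral_add_adjacent_intervals (a := (0:ℝ)) (b := π/2) (ii _ _) (ii _ _),
    piece1, piece2, piece3, piece4]
  norm_num


theorem lintegral_comp_polarCoord_symm' (f : ℝ × ℝ → ENNReal) :
    (∫⁻ p in polarCoord.target, ENNReal.ofReal p.1 * f (polarCoord.symm p)) = ∫⁻ p, f p := by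
  set B : ℝ × ℝ → ℝ × ℝ →L[ℝ] ℝ × ℝ := fun p =>
    LinearMap.toContinuousLinearMap (Matrix.toLin (Module.Basis.finTwoProd ℝ) (Module.Basis.finTwoProd ℝ)
      !![Real.cos p.2, -p.1 * Real.sin p.2; Real.sin p.2, p.1 * Real.cos p.2])
  have A : ∀ p ∈ polarCoord.target, HasFDerivWithinAt polarCoord.symm (B p) polarCoord.target p :=
    fun p _ => (hasFDerivAt_polarCoord_symm p).hasFDerivWithinAt
  have B_det : ∀ p, (B p).det = p.1 := by
    intro p
    conv_rhs => rw [← one_mul p.1, ← Real.cos_sq_add_sin_sq p.2]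
    simp only [B, neg_mul, LinearMap.det_toContinuousLinearMap, LinearMap.det_toLin,
      Matrix.det_fin_two_of, sub_neg_eq_add]
    ring
  symm
  calc
    ∫⁻ p, f p = ∫⁻ p in polarCoord.source, f p := by
      rw [← setLIntegral_univ]
      exact (setLIntegral_congr polarCoord_source_ae_eq_univ.symm)
    _ = ∫⁻ p in polarCoord.symm '' polarCoord.target, f p := by
      rw [polarCoord.symm_image_target_eq_source]
    _ = ∫⁻ p in polarCoord.target, ENNReal.ofReal |(B p).det| * f (polarCoord.symm p) := by
      apply lintegral_image_eq_lintegral_abs_det_fderiv_mul volume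
        polarCoord.open_target.measurableSet A
      exact polarCoord.symm.injOn
    _ = ∫⁻ p in polarCoord.target, ENNReal.ofReal p.1 * f (polarCoord.symm p) := by
      refine setLIntegral_congr_fun polarCoord.open_target.measurableSet
        (fun p hp => ?_)
      rw [B_det, abs_of_pos hp.1]

lemma lintA (M s : ℝ) (hM : 0 ≤ M) (hs : 0 ≤ s) :
    ∫⁻ c : ℝ, ENNReal.ofReal ((s + c^2) * Real.exp (-c^2/2) * M)
      = ENNReal.ofReal (√(2*π) * (s+1) * M) := by
  have hint : Integrable (fun c : ℝ => (s + c^2) * Real.exp (-c^2/2) * M) := by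
    have : (fun c : ℝ => (s + c^2) * Real.exp (-c^2/2) * M)
        = fun c : ℝ => (s * Real.exp (-c^2/2) + c^2 * Real.exp (-c^2/2)) * M := by
      funext c; ring
    rw [this]
    exact ((integrable_exp_half.const_mul s).add integrable_sq_exp_half).mul_const M
  rw [← ofReal_integral_eq_lintegral_ofReal hint
    (Filter.Eventually.of_forall fun c => by positivity)]
  congr 1
  have : (fun c : ℝ => (s + c^2) * Real.exp (-c^2/2) * M)
      = fun c : ℝ => (s * Real.exp (-c^2/2) + c^2 * Real.exp (-c^2/2)) * M := by
    funext c; ring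
  rw [this, MeasureTheory.integral_mul_const, integral_add (integrable_exp_half.const_mul s) integrable_sq_exp_half,
    MeasureTheory.integral_const_mul, gauss_e, gauss_sq]
  ring

lemma lintR : ∫⁻ r in Ioi (0:ℝ), ENNReal.ofReal ((r^2+1) * Real.exp (-r^2/2))
    = ENNReal.ofReal (√(2*π)) := by
  have hint : IntegrableOn (fun r : ℝ => (r^2+1) * Real.exp (-r^2/2)) (Ioi 0) := by
    have : (fun r : ℝ => (r^2+1) * Real.exp (-r^2/2))
        = fun r : ℝ => r^2 * Real.exp (-r^2/2) + Real.exp (-r^2/2) := by funext r; ring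
    rw [this]
    exact (integrable_sq_exp_half.add integrable_exp_half).integrableOn
  rw [← ofReal_integral_eq_lintegral_ofReal hint
    (Filter.Eventually.of_forall fun r => by positivity)]
  congr 1
  have : (fun r : ℝ => (r^2+1) * Real.exp (-r^2/2))
      = fun r : ℝ => r^2 * Real.exp (-r^2/2) + Real.exp (-r^2/2) := by funext r; ring
  rw [this, integral_add integrable_sq_exp_half.integrableOn integrable_exp_half.integrableOn,
    gauss_sq_Ioi, gauss_e_Ioi]
  ring

lemma lintTheta : ∫⁻ θ in Ioo (-π) π, ENNReal.ofReal (Cfun θ) = 1 := by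
  have hint : IntegrableOn Cfun (Ioo (-π) π) :=
    (Cfun_cont.integrableOn_Icc).mono_set Ioo_subset_Icc_self
  rw [← ofReal_integral_eq_lintegral_ofReal hint
    (Filter.Eventually.of_forall fun θ => by
      have : (0:ℝ) ≤ Cfun θ := mul_nonneg (le_max_right _ _) (abs_nonneg _)
      exact this), theta_int, ENNReal.ofReal_one]




noncomputable def hfun (r d : ℝ) : ℝ :=
  √(2*π) * (r^2 + d^2 + 1) * (|d| / (r^2 + d^2) ^ ((3:ℝ)/2) * Real.exp (-(r^2 + d^2)/2))

lemma hfun_meas : Measurable fun p : ℝ × ℝ => hfun p.1 p.2 := by unfold hfun; fun_prop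

noncomputable def Wfun (p : ℝ × ℝ) : ℝ := if 0 < p.1 then p.1 * hfun p.1 p.2 else 0

lemma Wfun_meas : Measurable Wfun := by
  unfold Wfun
  exact Measurable.ite (measurableSet_lt measurable_const measurable_fst)
    (measurable_fst.mul hfun_meas) measurable_const

lemma normsq4 (v : EuclideanSpace ℝ (Fin 4)) : ‖v‖^2 = v 0^2 + v 1^2 + v 2^2 + v 3^2 := by
  rw [EuclideanSpace.norm_eq, Real.sq_sqrt (by positivity)]
  simp [Fin.sum_univ_four, Real.norm_eq_abs, sq_abs]

lemma sq_rpow_three_halves {r : ℝ} (hr : 0 < r) : ((r^2 : ℝ)) ^ ((3:ℝ)/2) = r^3 := by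
  rw [show (r^2 : ℝ) = r ^ (2:ℝ) by rw [← Real.rpow_natCast r 2]; norm_num,
    ← Real.rpow_mul hr.le]
  rw [show (2:ℝ) * ((3:ℝ)/2) = ((3:ℕ):ℝ) by norm_num, Real.rpow_natCast]

set_option maxHeartbeats 1000000 in
theorem stmt18 :
    (1 / (2 * Real.pi) ^ 2) *
      ∫ v : EuclideanSpace ℝ (Fin 4),
        (‖v‖ ^ 2 * |v 3| / (‖v‖ ^ 2 - (v 2) ^ 2) ^ ((3:ℝ)/2)) *
          Real.exp (-‖v‖ ^ 2 / 2) = 1 := by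
  set f : EuclideanSpace ℝ (Fin 4) → ℝ := fun v =>
    (‖v‖ ^ 2 * |v 3| / (‖v‖ ^ 2 - (v 2) ^ 2) ^ ((3:ℝ)/2)) * Real.exp (-‖v‖ ^ 2 / 2) with hf
  have hmeas : Measurable f := by fun_prop
  have hnn : ∀ v, 0 ≤ f v := by
    intro v
    have h1 : (0:ℝ) ≤ ‖v‖ ^ 2 - (v 2) ^ 2 := by
      rw [normsq4]; nlinarith [sq_nonneg (v 0), sq_nonneg (v 1), sq_nonneg (v 3)]
    rw [hf]
    positivity
  have step1 : ∫ v, f v = (∫⁻ v, ENNReal.ofReal (f v)).toReal := by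
    exact integral_eq_lintegral_of_nonneg_ae (Filter.Eventually.of_forall hnn)
      hmeas.aestronglyMeasurable
  -- Step 2: transfer to the pi type
  have step2 : ∫⁻ v, ENNReal.ofReal (f v)
      = ∫⁻ x : Fin 4 → ℝ, ENNReal.ofReal
          (((x 0^2 + x 1^2 + x 2^2 + x 3^2) * |x 3| / (x 0^2 + x 1^2 + x 3^2) ^ ((3:ℝ)/2)) *
            Real.exp (-(x 0^2 + x 1^2 + x 2^2 + x 3^2)/2)) := by
    rw [← (PiLp.volume_preserving_toLp (Fin 4)).lintegral_comp hmeas.ennreal_ofReal]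
    refine lintegral_congr fun x => ?_
    congr 1
    rw [hf]
    show (‖(WithLp.toLp 2 x)‖ ^ 2 * |x 3| /
        (‖(WithLp.toLp 2 x)‖ ^ 2 - (x 2) ^ 2) ^ ((3:ℝ)/2)) *
        Real.exp (-‖(WithLp.toLp 2 x)‖ ^ 2 / 2) = _
    rw [normsq4]
    show ((x 0^2 + x 1^2 + x 2^2 + x 3^2) * |x 3| /
        ((x 0^2 + x 1^2 + x 2^2 + x 3^2) - (x 2)^2) ^ ((3:ℝ)/2)) *
        Real.exp (-(x 0^2 + x 1^2 + x 2^2 + x 3^2) / 2) = _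
    rw [show x 0^2 + x 1^2 + x 2^2 + x 3^2 - x 2^2 = x 0^2 + x 1^2 + x 3^2 by ring]
  -- Step 3: peel off coordinate 2 and integrate it
  have key3 : ∀ (w : Fin 3 → ℝ),
      (∫⁻ c : ℝ, ENNReal.ofReal
        (((w 0^2 + w 1^2 + c^2 + w 2^2) * |w 2| / (w 0^2 + w 1^2 + w 2^2) ^ ((3:ℝ)/2)) *
          Real.exp (-(w 0^2 + w 1^2 + c^2 + w 2^2)/2)))
      = ENNReal.ofReal (√(2*π) * ((w 0^2 + w 1^2 + w 2^2) + 1) *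
          (|w 2| / (w 0^2 + w 1^2 + w 2^2) ^ ((3:ℝ)/2) *
            Real.exp (-(w 0^2 + w 1^2 + w 2^2)/2))) := by
    intro w
    set S : ℝ := w 0^2 + w 1^2 + w 2^2 with hS
    set M : ℝ := |w 2| / S ^ ((3:ℝ)/2) * Real.exp (-S/2) with hM
    have hMnn : 0 ≤ M := by
      rw [hM]; positivity
    have hSnn : 0 ≤ S := by rw [hS]; positivity
    rw [← lintA M S hMnn hSnn]
    refine lintegral_congr fun c => ?_
    congr 1
    rw [hM]
    rw [show -(w 0^2 + w 1^2 + c^2 + w 2^2)/2 = -c^2/2 + -S/2 by rw [hS]; ring,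
      Real.exp_add, show w 0^2 + w 1^2 + c^2 + w 2^2 = S + c^2 by rw [hS]; ring]
    ring
  have step3 : ∫⁻ x : Fin 4 → ℝ, ENNReal.ofReal
          (((x 0^2 + x 1^2 + x 2^2 + x 3^2) * |x 3| / (x 0^2 + x 1^2 + x 3^2) ^ ((3:ℝ)/2)) *
            Real.exp (-(x 0^2 + x 1^2 + x 2^2 + x 3^2)/2))
      = ∫⁻ w : Fin 3 → ℝ, ENNReal.ofReal
          (√(2*π) * ((w 0^2 + w 1^2 + w 2^2) + 1) *
            (|w 2| / (w 0^2 + w 1^2 + w 2^2) ^ ((3:ℝ)/2) *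
              Real.exp (-(w 0^2 + w 1^2 + w 2^2)/2)))
          ∂(Measure.pi fun _ => volume) := by
    have hg : Measurable fun x : Fin 4 → ℝ => ENNReal.ofReal
          (((x 0^2 + x 1^2 + x 2^2 + x 3^2) * |x 3| / (x 0^2 + x 1^2 + x 3^2) ^ ((3:ℝ)/2)) *
            Real.exp (-(x 0^2 + x 1^2 + x 2^2 + x 3^2)/2)) := by fun_prop
    have hg2 : Measurable fun a : ℝ × (Fin 3 → ℝ) => ENNReal.ofReal
          (((a.2 0^2 + a.2 1^2 + a.1^2 + a.2 2^2) * |a.2 2| / (a.2 0^2 + a.2 1^2 + a.2 2^2) ^ ((3:ℝ)/2)) *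
            Real.exp (-(a.2 0^2 + a.2 1^2 + a.1^2 + a.2 2^2)/2)) := by fun_prop
    calc ∫⁻ x : Fin 4 → ℝ, ENNReal.ofReal
          (((x 0^2 + x 1^2 + x 2^2 + x 3^2) * |x 3| / (x 0^2 + x 1^2 + x 3^2) ^ ((3:ℝ)/2)) *
            Real.exp (-(x 0^2 + x 1^2 + x 2^2 + x 3^2)/2))
        = ∫⁻ a : ℝ × (Fin 3 → ℝ), ENNReal.ofReal
          (((a.2 0^2 + a.2 1^2 + a.1^2 + a.2 2^2) * |a.2 2| / (a.2 0^2 + a.2 1^2 + a.2 2^2) ^ ((3:ℝ)/2)) *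
            Real.exp (-(a.2 0^2 + a.2 1^2 + a.1^2 + a.2 2^2)/2))
          ∂((volume : Measure ℝ).prod (Measure.pi fun _ : Fin 3 => volume)) :=
        (((measurePreserving_piFinSuccAbove (fun _ : Fin 4 => (volume : Measure ℝ)) 2).symm
          (MeasurableEquiv.piFinSuccAbove (fun _ => ℝ) 2)).lintegral_comp hg).symm
      _ = ∫⁻ w : Fin 3 → ℝ, ∫⁻ c : ℝ, ENNReal.ofReal
          (((w 0^2 + w 1^2 + c^2 + w 2^2) * |w 2| / (w 0^2 + w 1^2 + w 2^2) ^ ((3:ℝ)/2)) *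
            Real.exp (-(w 0^2 + w 1^2 + c^2 + w 2^2)/2)) ∂volume
          ∂(Measure.pi fun _ : Fin 3 => volume) :=
        lintegral_prod_symm _ hg2.aemeasurable
      _ = ∫⁻ w : Fin 3 → ℝ, ENNReal.ofReal
          (√(2*π) * ((w 0^2 + w 1^2 + w 2^2) + 1) *
            (|w 2| / (w 0^2 + w 1^2 + w 2^2) ^ ((3:ℝ)/2) *
              Real.exp (-(w 0^2 + w 1^2 + w 2^2)/2)))
          ∂(Measure.pi fun _ => volume) := lintegral_congr fun w => key3 w
  -- Step 4: peel off the last coordinate and convert the remaining two to ℝ × ℝ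
  have step4 : ∫⁻ w : Fin 3 → ℝ, ENNReal.ofReal
          (√(2*π) * ((w 0^2 + w 1^2 + w 2^2) + 1) *
            (|w 2| / (w 0^2 + w 1^2 + w 2^2) ^ ((3:ℝ)/2) *
              Real.exp (-(w 0^2 + w 1^2 + w 2^2)/2)))
          ∂(Measure.pi fun _ => volume)
      = ∫⁻ d : ℝ, ∫⁻ q : ℝ × ℝ, ENNReal.ofReal
          (√(2*π) * ((q.1^2 + q.2^2 + d^2) + 1) *
            (|d| / (q.1^2 + q.2^2 + d^2) ^ ((3:ℝ)/2) *
              Real.exp (-(q.1^2 + q.2^2 + d^2)/2))) := by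
    have hg : Measurable fun w : Fin 3 → ℝ => ENNReal.ofReal
          (√(2*π) * ((w 0^2 + w 1^2 + w 2^2) + 1) *
            (|w 2| / (w 0^2 + w 1^2 + w 2^2) ^ ((3:ℝ)/2) *
              Real.exp (-(w 0^2 + w 1^2 + w 2^2)/2))) := by fun_prop
    have hg2 : Measurable fun a : ℝ × (Fin 2 → ℝ) => ENNReal.ofReal
          (√(2*π) * ((a.2 0^2 + a.2 1^2 + a.1^2) + 1) *
            (|a.1| / (a.2 0^2 + a.2 1^2 + a.1^2) ^ ((3:ℝ)/2) *
              Real.exp (-(a.2 0^2 + a.2 1^2 + a.1^2)/2))) := by fun_prop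
    have hg3 : ∀ d : ℝ, Measurable fun u : Fin 2 → ℝ => ENNReal.ofReal
          (√(2*π) * ((u 0^2 + u 1^2 + d^2) + 1) *
            (|d| / (u 0^2 + u 1^2 + d^2) ^ ((3:ℝ)/2) *
              Real.exp (-(u 0^2 + u 1^2 + d^2)/2))) := by intro d; fun_prop
    calc ∫⁻ w : Fin 3 → ℝ, ENNReal.ofReal
          (√(2*π) * ((w 0^2 + w 1^2 + w 2^2) + 1) *
            (|w 2| / (w 0^2 + w 1^2 + w 2^2) ^ ((3:ℝ)/2) *
              Real.exp (-(w 0^2 + w 1^2 + w 2^2)/2)))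
          ∂(Measure.pi fun _ => volume)
        = ∫⁻ a : ℝ × (Fin 2 → ℝ), ENNReal.ofReal
          (√(2*π) * ((a.2 0^2 + a.2 1^2 + a.1^2) + 1) *
            (|a.1| / (a.2 0^2 + a.2 1^2 + a.1^2) ^ ((3:ℝ)/2) *
              Real.exp (-(a.2 0^2 + a.2 1^2 + a.1^2)/2)))
          ∂((volume : Measure ℝ).prod (Measure.pi fun _ : Fin 2 => volume)) :=
        (((measurePreserving_piFinSuccAbove (fun _ : Fin 3 => (volume : Measure ℝ)) 2).symm
          (MeasurableEquiv.piFinSuccAbove (fun _ => ℝ) 2)).lintegral_comp hg).symm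
      _ = ∫⁻ d : ℝ, ∫⁻ u : Fin 2 → ℝ, ENNReal.ofReal
          (√(2*π) * ((u 0^2 + u 1^2 + d^2) + 1) *
            (|d| / (u 0^2 + u 1^2 + d^2) ^ ((3:ℝ)/2) *
              Real.exp (-(u 0^2 + u 1^2 + d^2)/2)))
          ∂(Measure.pi fun _ : Fin 2 => volume) ∂volume :=
        lintegral_prod _ hg2.aemeasurable
      _ = ∫⁻ d : ℝ, ∫⁻ q : ℝ × ℝ, ENNReal.ofReal
          (√(2*π) * ((q.1^2 + q.2^2 + d^2) + 1) *
            (|d| / (q.1^2 + q.2^2 + d^2) ^ ((3:ℝ)/2) *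
              Real.exp (-(q.1^2 + q.2^2 + d^2)/2))) :=
        lintegral_congr fun d =>
          (((volume_preserving_finTwoArrow ℝ).symm
            MeasurableEquiv.finTwoArrow).lintegral_comp (hg3 d)).symm
  have hWmeas : Measurable fun p : ℝ × ℝ => ENNReal.ofReal (Wfun p) := Wfun_meas.ennreal_ofReal
  have step5 : ∀ d : ℝ, (∫⁻ q : ℝ × ℝ, ENNReal.ofReal
          (√(2*π) * ((q.1^2 + q.2^2 + d^2) + 1) *
            (|d| / (q.1^2 + q.2^2 + d^2) ^ ((3:ℝ)/2) *
              Real.exp (-(q.1^2 + q.2^2 + d^2)/2))))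
      = ENNReal.ofReal (2*π) * ∫⁻ r : ℝ, ENNReal.ofReal (Wfun (r, d)) := by
    intro d
    have hm1 : Measurable fun p : ℝ × ℝ => ENNReal.ofReal (p.1 * hfun p.1 d) := by
      refine Measurable.ennreal_ofReal (measurable_fst.mul ?_)
      exact hfun_meas.comp (measurable_fst.prodMk measurable_const)
    calc ∫⁻ q : ℝ × ℝ, ENNReal.ofReal
          (√(2*π) * ((q.1^2 + q.2^2 + d^2) + 1) *
            (|d| / (q.1^2 + q.2^2 + d^2) ^ ((3:ℝ)/2) *
              Real.exp (-(q.1^2 + q.2^2 + d^2)/2)))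
        = ∫⁻ p in polarCoord.target, ENNReal.ofReal p.1 *
            (fun q : ℝ × ℝ => ENNReal.ofReal
              (√(2*π) * ((q.1^2 + q.2^2 + d^2) + 1) *
                (|d| / (q.1^2 + q.2^2 + d^2) ^ ((3:ℝ)/2) *
                  Real.exp (-(q.1^2 + q.2^2 + d^2)/2)))) (polarCoord.symm p) :=
          (lintegral_comp_polarCoord_symm' _).symm
      _ = ∫⁻ p in polarCoord.target, ENNReal.ofReal (p.1 * hfun p.1 d) := by
          refine setLIntegral_congr_fun polarCoord.open_target.measurableSet
            (fun p hp => ?_)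
          rw [polarCoord_target] at hp
          simp only [polarCoord_symm_apply]
          have h1 : (p.1 * Real.cos p.2)^2 + (p.1 * Real.sin p.2)^2 = p.1^2 := by
            nlinarith [Real.sin_sq_add_cos_sq p.2]
          rw [h1, ← ENNReal.ofReal_mul (le_of_lt hp.1)]
          rfl
      _ = ∫⁻ r in Ioi (0:ℝ), ∫⁻ θ in Ioo (-π) π, ENNReal.ofReal (r * hfun r d) := by
          rw [polarCoord_target, Measure.volume_eq_prod, ← Measure.prod_restrict]
          exact lintegral_prod _ hm1.aemeasurable
      _ = ∫⁻ r in Ioi (0:ℝ), ENNReal.ofReal (2*π) * ENNReal.ofReal (r * hfun r d) :=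
          lintegral_congr fun r => by
            rw [setLIntegral_const, Real.volume_Ioo, show π - -π = 2*π by ring, mul_comm]
      _ = ENNReal.ofReal (2*π) * ∫⁻ r in Ioi (0:ℝ), ENNReal.ofReal (r * hfun r d) :=
          lintegral_const_mul' _ _ ENNReal.ofReal_ne_top
      _ = ENNReal.ofReal (2*π) * ∫⁻ r : ℝ, ENNReal.ofReal (Wfun (r, d)) := by
          rw [← lintegral_indicator measurableSet_Ioi]
          congr 1
          refine lintegral_congr fun r => ?_
          by_cases h : 0 < r
          · simp [Wfun, indicator, mem_Ioi, h]
          · simp [Wfun, indicator, mem_Ioi, h]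
  have step6 : ∫⁻ d : ℝ, (ENNReal.ofReal (2*π) * ∫⁻ r : ℝ, ENNReal.ofReal (Wfun (r, d)))
      = ENNReal.ofReal (2*π) * ∫⁻ p : ℝ × ℝ, ENNReal.ofReal (Wfun p) := by
    rw [lintegral_const_mul' _ _ ENNReal.ofReal_ne_top]
    congr 1
    conv_rhs => rw [Measure.volume_eq_prod]
    rw [lintegral_prod_symm _ hWmeas.aemeasurable]
  have step7 : ∫⁻ p : ℝ × ℝ, ENNReal.ofReal (Wfun p) = ENNReal.ofReal (2*π) := by
    have hm2 : Measurable fun p : ℝ × ℝ =>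
        ENNReal.ofReal (√(2*π)) * (ENNReal.ofReal ((p.1^2+1) * Real.exp (-p.1^2/2)) *
          ENNReal.ofReal (Cfun p.2)) := by
      refine measurable_const.fun_mul (Measurable.fun_mul ?_ ?_)
      · fun_prop
      · exact ((Cfun_cont.measurable).comp measurable_snd).ennreal_ofReal
    calc ∫⁻ p : ℝ × ℝ, ENNReal.ofReal (Wfun p)
        = ∫⁻ p in polarCoord.target, ENNReal.ofReal p.1 *
            (fun p : ℝ × ℝ => ENNReal.ofReal (Wfun p)) (polarCoord.symm p) :=
          (lintegral_comp_polarCoord_symm' _).symm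
      _ = ∫⁻ p in polarCoord.target, ENNReal.ofReal (√(2*π)) *
            (ENNReal.ofReal ((p.1^2+1) * Real.exp (-p.1^2/2)) * ENNReal.ofReal (Cfun p.2)) := by
          refine setLIntegral_congr_fun polarCoord.open_target.measurableSet
            (fun p hp => ?_)
          rw [polarCoord_target] at hp
          simp only [polarCoord_symm_apply]
          by_cases hc : 0 < Real.cos p.2
          · have hpos : 0 < p.1 * Real.cos p.2 := mul_pos hp.1 hc
            have h1 : (p.1 * Real.cos p.2)^2 + (p.1 * Real.sin p.2)^2 = p.1^2 := by
              nlinarith [Real.sin_sq_add_cos_sq p.2]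
            have habs : |p.1 * Real.sin p.2| = p.1 * |Real.sin p.2| := by
              rw [abs_mul, abs_of_pos hp.1]
            have hC : Cfun p.2 = Real.cos p.2 * |Real.sin p.2| := by
              rw [Cfun, max_eq_left hc.le]
            simp only [Wfun, if_pos hpos]
            unfold hfun
            rw [h1, habs, sq_rpow_three_halves hp.1, hC,
              ← ENNReal.ofReal_mul (le_of_lt hp.1),
              ← ENNReal.ofReal_mul (by positivity),
              ← ENNReal.ofReal_mul (Real.sqrt_nonneg _)]
            congr 1
            have hne : p.1 ≠ 0 := ne_of_gt hp.1
            field_simp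
          · have hneg : ¬ (0 < p.1 * Real.cos p.2) := by
              have h0 : p.1 * Real.cos p.2 ≤ 0 :=
                mul_nonpos_of_nonneg_of_nonpos hp.1.le (not_lt.mp hc)
              exact not_lt.mpr h0
            have hC : Cfun p.2 = 0 := by
              rw [Cfun, max_eq_right (not_lt.mp hc), zero_mul]
            simp [Wfun, if_neg hneg, hC]
      _ = ∫⁻ r in Ioi (0:ℝ), ∫⁻ θ in Ioo (-π) π, ENNReal.ofReal (√(2*π)) *
            (ENNReal.ofReal ((r^2+1) * Real.exp (-r^2/2)) * ENNReal.ofReal (Cfun θ)) := by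
          rw [polarCoord_target, Measure.volume_eq_prod, ← Measure.prod_restrict]
          exact lintegral_prod _ hm2.aemeasurable
      _ = ∫⁻ r in Ioi (0:ℝ), ENNReal.ofReal (√(2*π)) *
            ENNReal.ofReal ((r^2+1) * Real.exp (-r^2/2)) := by
          refine lintegral_congr fun r => ?_
          simp_rw [← mul_assoc]
          rw [lintegral_const_mul' _ _
            (ENNReal.mul_ne_top ENNReal.ofReal_ne_top ENNReal.ofReal_ne_top), lintTheta, mul_one]
      _ = ENNReal.ofReal (√(2*π)) * ENNReal.ofReal (√(2*π)) := by
          rw [lintegral_const_mul' _ _ ENNReal.ofReal_ne_top, lintR]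
      _ = ENNReal.ofReal (2*π) := by
          rw [← ENNReal.ofReal_mul (Real.sqrt_nonneg _), Real.mul_self_sqrt (by positivity)]
  have hI : ∫⁻ v, ENNReal.ofReal (f v) = ENNReal.ofReal (2*π) * ENNReal.ofReal (2*π) := by
    rw [step2, step3, step4]
    simp_rw [step5]
    rw [step6, step7]
  rw [step1, hI, ← ENNReal.ofReal_mul (by positivity), ENNReal.toReal_ofReal (by positivity)]
  have hpi : (π : ℝ) ≠ 0 := Real.pi_ne_zero
  field_simp

end AuxStmt18
end
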